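/- Let J, H be Hilbert spaces, K ∈ B(J,H), and {gₙ} ⊂ H satisfying the K-frame inequality α‖K* f‖_J² ≤ ∑ₙ |⟨f, gₙ⟩|² ≤ β‖f‖² for all f ∈ H. Then the synthesis operator D of {gₙ} is bounded on ℓ² and R(K) ⊆ R(D), and consequently there exists M ∈ B(J, ℓ²) with K = D M. -/

import Mathlib

open scoped ComplexInnerProductSpace

open scoped ENNReal NNReal

set_option maxHeartbeats 2000000 in
/-- Let `J, H` be Hilbert spaces, `K ∈ B(J,H)`, and `{gₙ} ⊂ H` satisfying the `K`-frame
inequality `α‖K* f‖_J² ≤ ∑ₙ |⟨f, gₙ⟩|² ≤ β‖f‖²` for all `f ∈ H`. Then the synthesis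
operator `D` of `{gₙ}` is bounded on `ℓ²` and `R(K) ⊆ R(D)`, and consequently there exists
`M ∈ B(J, ℓ²)` with `K = D M`. -/
theorem stmt_15 {J H : Type*}
    [NormedAddCommGroup J] [InnerProductSpace ℂ J] [CompleteSpace J]
    [NormedAddCommGroup H] [InnerProductSpace ℂ H] [CompleteSpace H]
    (K : J →L[ℂ] H) (g : ℕ → H)
    (α β : ℝ) (hα : 0 < α) (hβ : 0 < β)
    (hKframe : ∀ f : H, (Summable fun n => ‖⟪f, g n⟫‖ ^ 2) ∧
      α * ‖ContinuousLinearMap.adjoint K f‖ ^ 2 ≤ ∑' n, ‖⟪f, g n⟫‖ ^ 2 ∧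
      ∑' n, ‖⟪f, g n⟫‖ ^ 2 ≤ β * ‖f‖ ^ 2) :
    ∃ D : lp (fun _ : ℕ => ℂ) 2 →L[ℂ] H,
      (∀ c : lp (fun _ : ℕ => ℂ) 2, HasSum (fun n => c n • g n) (D c)) ∧
      Set.range K ⊆ Set.range D ∧
      ∃ M : J →L[ℂ] lp (fun _ : ℕ => ℂ) 2, K = D.comp M := by
  classical
  have htr : (2 : ℝ≥0∞).toReal = (2 : ℝ) := by norm_num
  have hrpow : ∀ x : ℝ, 0 ≤ x → x ^ (2 : ℝ≥0∞).toReal = x ^ (2 : ℕ) := by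
    intro x hx
    rw [htr, Real.rpow_two]
  have hmem : ∀ f : H, Memℓp (fun n => ⟪g n, f⟫) 2 := by
    intro f
    apply memℓp_gen
    have hs := (hKframe f).1
    have : (fun n => ‖(⟪g n, f⟫ : ℂ)‖ ^ (2 : ℝ≥0∞).toReal) = fun n => ‖⟪f, g n⟫‖ ^ 2 := by
      funext n
      rw [hrpow _ (norm_nonneg _), norm_inner_symm]
    rw [this]
    exact hs
  -- the analysis operator
  set Tlin : H →ₗ[ℂ] lp (fun _ : ℕ => ℂ) 2 :=
    { toFun := fun f => ⟨fun n => ⟪g n, f⟫, hmem f⟩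
      map_add' := by
        intro x y
        apply Subtype.ext
        funext n
        exact inner_add_right _ _ _
      map_smul' := by
        intro c x
        apply Subtype.ext
        funext n
        exact inner_smul_right _ _ _ } with hTlin
  have hTnormsq : ∀ f : H, ‖Tlin f‖ ^ 2 = ∑' n, ‖⟪f, g n⟫‖ ^ 2 := by
    intro f
    have h2 : (0:ℝ) < (2 : ℝ≥0∞).toReal := by rw [htr]; norm_num
    have := lp.norm_rpow_eq_tsum h2 (Tlin f)
    rw [hrpow _ (norm_nonneg _)] at this
    rw [this]
    congr 1
    funext n
    rw [hrpow _ (norm_nonneg _)]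
    have : (Tlin f) n = ⟪g n, f⟫ := rfl
    rw [this, norm_inner_symm]
  have hTub : ∀ f : H, ‖Tlin f‖ ≤ Real.sqrt β * ‖f‖ := by
    intro f
    have h1 : ‖Tlin f‖ ^ 2 ≤ (Real.sqrt β * ‖f‖) ^ 2 := by
      rw [hTnormsq f, mul_pow, Real.sq_sqrt hβ.le]
      exact (hKframe f).2.2
    have h2 : (0:ℝ) ≤ Real.sqrt β * ‖f‖ := by positivity
    nlinarith [norm_nonneg (Tlin f)]
  set T : H →L[ℂ] lp (fun _ : ℕ => ℂ) 2 := Tlin.mkContinuous (Real.sqrt β) hTub with hT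
  have hTapp : ∀ f n, (T f) n = ⟪g n, f⟫ := fun f n => rfl
  -- lower bound : ‖K† f‖ ≤ √(α⁻¹) ‖T f‖
  have hTlb : ∀ f : H, ‖ContinuousLinearMap.adjoint K f‖ ≤ Real.sqrt α⁻¹ * ‖T f‖ := by
    intro f
    have h1 : α * ‖ContinuousLinearMap.adjoint K f‖ ^ 2 ≤ ‖T f‖ ^ 2 := by
      have : ‖T f‖ ^ 2 = ∑' n, ‖⟪f, g n⟫‖ ^ 2 := hTnormsq f
      rw [this]
      exact (hKframe f).2.1
    have h2 : ‖ContinuousLinearMap.adjoint K f‖ ^ 2 ≤ (Real.sqrt α⁻¹ * ‖T f‖) ^ 2 := by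
      rw [mul_pow, Real.sq_sqrt (by positivity)]
      rw [inv_mul_eq_div, le_div_iff₀ hα, mul_comm]
      exact h1
    have h3 : (0:ℝ) ≤ Real.sqrt α⁻¹ * ‖T f‖ := by positivity
    nlinarith [norm_nonneg (ContinuousLinearMap.adjoint K f)]
  -- well-definedness
  have hwd : ∀ f f' : H, T f = T f' → ContinuousLinearMap.adjoint K f =
      ContinuousLinearMap.adjoint K f' := by
    intro f f' hff
    have : T (f - f') = 0 := by rw [map_sub, hff, sub_self]
    have h0 : ‖ContinuousLinearMap.adjoint K (f - f')‖ ≤ 0 := by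
      have h := hTlb (f - f')
      rw [this] at h
      simpa using h
    have : ContinuousLinearMap.adjoint K (f - f') = 0 :=
      norm_le_zero_iff.mp h0
    rw [map_sub, sub_eq_zero] at this
    exact this
  -- synthesis operator
  set D : lp (fun _ : ℕ => ℂ) 2 →L[ℂ] H := ContinuousLinearMap.adjoint T with hD
  have hDsingle : ∀ n : ℕ, D (lp.single 2 n (1 : ℂ) : lp (fun _ : ℕ => ℂ) 2) = g n := by
    intro n
    apply ext_inner_right ℂ
    intro f
    rw [hD, ContinuousLinearMap.adjoint_inner_left, lp.inner_single_left, RCLike.inner_apply]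
    simp [hTapp]
  have hDsum : ∀ c : lp (fun _ : ℕ => ℂ) 2, HasSum (fun n => c n • g n) (D c) := by
    intro c
    have hs := lp.hasSum_single (by norm_num : (2 : ℝ≥0∞) ≠ ⊤) c
    have hs2 := D.hasSum hs
    convert hs2 using 2 with n
    have h1 : lp.single 2 n (c n) = c n • (lp.single 2 n (1 : ℂ) : lp (fun _ : ℕ => ℂ) 2) := by
      rw [← lp.single_smul]
      simp [smul_eq_mul]
    rw [h1, map_smul, hDsingle]
  -- Douglas factorization
  set R : Submodule ℂ (lp (fun _ : ℕ => ℂ) 2) := LinearMap.range (T : H →ₗ[ℂ] lp (fun _ : ℕ => ℂ) 2) with hR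
  have hmemR : ∀ x : R, ∃ f : H, T f = (x : lp (fun _ : ℕ => ℂ) 2) := fun x => x.2
  choose pre hpre using hmemR
  set N₀lin : R →ₗ[ℂ] J :=
    { toFun := fun x => ContinuousLinearMap.adjoint K (pre x)
      map_add' := by
        intro x y
        rw [← map_add]
        apply hwd
        rw [hpre (x + y), map_add, hpre x, hpre y, Submodule.coe_add]
      map_smul' := by
        intro c x
        simp only [RingHom.id_apply]
        rw [← map_smul]
        apply hwd
        rw [hpre (c • x), map_smul, hpre x, Submodule.coe_smul] } with hN₀lin
  have hN₀bound : ∀ x : R, ‖N₀lin x‖ ≤ Real.sqrt α⁻¹ * ‖x‖ := by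
    intro x
    have h := hTlb (pre x)
    rw [hpre x] at h
    exact h
  set N₀ : R →L[ℂ] J := N₀lin.mkContinuous (Real.sqrt α⁻¹) hN₀bound with hN₀
  have hRS : R ≤ R.topologicalClosure := R.le_topologicalClosure
  set e : R →L[ℂ] ↥R.topologicalClosure :=
    { toLinearMap := Submodule.inclusion hRS
      cont := continuous_induced_rng.mpr continuous_subtype_val } with he
  have hiso : Isometry e := Isometry.of_dist_eq fun a b => rfl
  have hui : IsUniformInducing e := hiso.isUniformInducing
  have hdense : DenseRange e := by
    intro x
    have himg : Subtype.val '' Set.range e = (R : Set (lp (fun _ : ℕ => ℂ) 2)) := by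
      ext y
      constructor
      · rintro ⟨z, ⟨r, rfl⟩, rfl⟩
        exact r.2
      · intro hy
        exact ⟨e ⟨y, hy⟩, ⟨⟨y, hy⟩, rfl⟩, rfl⟩
    rw [closure_subtype, himg]
    have := x.2
    rwa [← Submodule.topologicalClosure_coe] at *
  set Nbar : ↥R.topologicalClosure →L[ℂ] J := N₀.extend e with hNbar
  set N : lp (fun _ : ℕ => ℂ) 2 →L[ℂ] J :=
    Nbar.comp (Submodule.orthogonalProjection R.topologicalClosure) with hN
  have hNT : ∀ f : H, N (T f) = ContinuousLinearMap.adjoint K f := by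
    intro f
    have hmem1 : T f ∈ R := ⟨f, rfl⟩
    have hmem2 : T f ∈ R.topologicalClosure := hRS hmem1
    have hproj : Submodule.orthogonalProjection R.topologicalClosure (T f) = ⟨T f, hmem2⟩ :=
      Submodule.orthogonalProjection_mem_subspace_eq_self (⟨T f, hmem2⟩ : R.topologicalClosure)
    have hee : (⟨T f, hmem2⟩ : R.topologicalClosure) = e ⟨T f, hmem1⟩ := rfl
    have hext : Nbar (e ⟨T f, hmem1⟩) = N₀ ⟨T f, hmem1⟩ :=
      ContinuousLinearMap.extend_eq (f := N₀) (e := e) hdense hui _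
    have hN₀val : N₀ ⟨T f, hmem1⟩ = ContinuousLinearMap.adjoint K f := by
      apply hwd
      exact hpre ⟨T f, hmem1⟩
    calc N (T f) = Nbar (Submodule.orthogonalProjection R.topologicalClosure (T f)) := rfl
      _ = Nbar (e ⟨T f, hmem1⟩) := by rw [hproj, hee]
      _ = ContinuousLinearMap.adjoint K f := by rw [hext, hN₀val]
  set M : J →L[ℂ] lp (fun _ : ℕ => ℂ) 2 := ContinuousLinearMap.adjoint N with hM
  have hfact : K = D.comp M := by
    have h1 : ContinuousLinearMap.adjoint (D.comp M) = ContinuousLinearMap.adjoint K := by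
      rw [ContinuousLinearMap.adjoint_comp, hM, hD, ContinuousLinearMap.adjoint_adjoint,
        ContinuousLinearMap.adjoint_adjoint]
      ext f
      exact hNT f
    have h2 := congrArg ContinuousLinearMap.adjoint h1
    rw [ContinuousLinearMap.adjoint_adjoint, ContinuousLinearMap.adjoint_adjoint] at h2
    exact h2.symm
  refine ⟨D, hDsum, ?_, M, hfact⟩
  rintro _ ⟨j, rfl⟩
  exact ⟨M j, by rw [hfact]; rfl⟩
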